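/- For integers n and Δ with 3 ≤ Δ ≤ n−1, we have ecc(B(n,Δ)) < ecc(B(n,Δ−1)). Consequently the chain of strict inequalities ecc(S_n) = ecc(B(n,n−1)) < ecc(B(n,n−2)) < ⋯ < ecc(B(n,3)) < ecc(B(n,2)) = ecc(P_n) holds. -/

import Mathlib

set_option linter.unusedSectionVars false
set_option maxHeartbeats 1000000


open SimpleGraph

/-- The eccentricity of a vertex: the maximum distance from it to any other vertex. -/
noncomputable def eccentricity {V : Type*} [Fintype V] (G : SimpleGraph V) (v : V) : ℕ :=
  Finset.univ.sup fun u => G.dist v u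

/-- The average eccentricity of a graph. -/
noncomputable def avgEcc {V : Type*} [Fintype V] (G : SimpleGraph V) : ℝ :=
  (∑ v : V, (eccentricity G v : ℝ)) / (Fintype.card V : ℝ)

/-- The broom `B(n, Δ)`: a path `0 — 1 — ⋯ — (n-Δ)` together with `Δ-1` pendant
vertices `n-Δ+1, …, n-1` attached to the vertex `n-Δ`. -/
def broom (n Δ : ℕ) : SimpleGraph (Fin n) :=
  SimpleGraph.fromRel (fun i j =>
    ((i : ℕ) + 1 = (j : ℕ) ∧ (j : ℕ) ≤ n - Δ) ∨ ((i : ℕ) = n - Δ ∧ n - Δ < (j : ℕ)))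

/-- The star `S n` on `n` vertices with center `0`. -/
def starGraph (n : ℕ) : SimpleGraph (Fin n) :=
  SimpleGraph.fromRel (fun i _ => (i : ℕ) = 0)





lemma broom_adj {n Δ : ℕ} {i j : Fin n} :
    (broom n Δ).Adj i j ↔ (i : ℕ) ≠ (j : ℕ) ∧
      (((i : ℕ) + 1 = (j : ℕ) ∧ (j : ℕ) ≤ n - Δ) ∨ ((i : ℕ) = n - Δ ∧ n - Δ < (j : ℕ)) ∨
       ((j : ℕ) + 1 = (i : ℕ) ∧ (i : ℕ) ≤ n - Δ) ∨ ((j : ℕ) = n - Δ ∧ n - Δ < (i : ℕ))) := by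
  simp only [broom, fromRel_adj, ne_eq, Fin.ext_iff]
  tauto

lemma broom_pathWalk {n Δ : ℕ} : ∀ (d k : ℕ) (h1 : k < n) (h2 : k + d < n),
    k + d ≤ n - Δ → ∃ w : (broom n Δ).Walk ⟨k, h1⟩ ⟨k + d, h2⟩, w.length = d := by
  intro d
  induction d with
  | zero => intro k h1 h2 _; exact ⟨(Walk.nil).copy rfl (by simp), by simp⟩
  | succ d ih =>
      intro k h1 h2 hm
      obtain ⟨w, hw⟩ := ih k h1 (by omega) (by omega)
      have hadj : (broom n Δ).Adj ⟨k + d, by omega⟩ ⟨k + (d+1), h2⟩ := by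
        rw [broom_adj]; simp only [Fin.val_mk, true_and, and_true, le_refl, lt_self_iff_false, false_and, and_false, or_false, false_or]; omega
      exact ⟨w.concat hadj, by simp [hw]⟩

section Broom
variable {n Δ : ℕ} (hΔ2 : 2 ≤ Δ) (hΔn : Δ + 1 ≤ n)

include hΔ2 hΔn

lemma broom_dist_pp {u v : Fin n} (h1 : (u : ℕ) ≤ v) (hv : (v : ℕ) ≤ n - Δ) :
    (broom n Δ).dist u v ≤ (v : ℕ) - u := by
  obtain ⟨w, hw⟩ := broom_pathWalk (n := n) (Δ := Δ) ((v : ℕ) - u) u u.isLt (by omega) (by omega)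
  have hcopy : (broom n Δ).dist u v ≤ (w.copy (Fin.ext rfl) (Fin.ext (show (u : ℕ) + ((v : ℕ) - u) = v by omega) : (⟨(u : ℕ) + ((v : ℕ) - u), by omega⟩ : Fin n) = v)).length := dist_le _
  simpa [hw] using hcopy

lemma broom_dist_pend {u v : Fin n} (hu : (u : ℕ) ≤ n - Δ) (hv : n - Δ < (v : ℕ)) :
    (broom n Δ).dist u v ≤ n - Δ - u + 1 := by
  have hmn : n - Δ < n := by omega
  obtain ⟨w, hw⟩ := broom_pathWalk (n := n) (Δ := Δ) (n - Δ - u) u u.isLt (by omega) (by omega)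
  have hadj : (broom n Δ).Adj ⟨(u : ℕ) + (n - Δ - u), by omega⟩ v := by
    rw [broom_adj]; simp only [Fin.val_mk, true_and, and_true, le_refl, lt_self_iff_false, false_and, and_false, or_false, false_or]; omega
  have := dist_le ((w.concat hadj).copy (Fin.ext rfl) rfl)
  simpa [hw] using this

lemma broom_dist_pend_pend {u v : Fin n} (hu : n - Δ < (u : ℕ)) (hv : n - Δ < (v : ℕ))
    (huv : u ≠ v) : (broom n Δ).dist u v ≤ 2 := by
  have hmn : n - Δ < n := by omega
  have h1 : (broom n Δ).Adj u ⟨n - Δ, hmn⟩ := by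
    rw [broom_adj]; simp only [Fin.val_mk, true_and, and_true, le_refl, lt_self_iff_false, false_and, and_false, or_false, false_or]; omega
  have h2 : (broom n Δ).Adj ⟨n - Δ, hmn⟩ v := by
    rw [broom_adj]; simp only [Fin.val_mk, true_and, and_true, le_refl, lt_self_iff_false, false_and, and_false, or_false, false_or]
    have := Fin.val_ne_of_ne huv
    omega
  have := dist_le (Walk.cons h1 (Walk.cons h2 Walk.nil))
  simpa using this

lemma broom_reach_center (v : Fin n) :
    (broom n Δ).Reachable v ⟨n - Δ, by omega⟩ := by
  rcases le_or_gt (v : ℕ) (n - Δ) with hv | hv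
  · obtain ⟨w, _⟩ := broom_pathWalk (n := n) (Δ := Δ) (n - Δ - v) v v.isLt (by omega) (by omega)
    exact ⟨w.copy (Fin.ext rfl) (Fin.ext (show (v : ℕ) + (n - Δ - v) = n - Δ by omega) : (⟨(v : ℕ) + (n - Δ - v), by omega⟩ : Fin n) = ⟨n - Δ, by omega⟩)⟩
  · exact Adj.reachable (by rw [broom_adj]; simp only [Fin.val_mk, true_and, and_true, le_refl, lt_self_iff_false, false_and, and_false, or_false, false_or]; omega)

lemma broom_reach (u v : Fin n) : (broom n Δ).Reachable u v :=
  (broom_reach_center hΔ2 hΔn u).trans (broom_reach_center hΔ2 hΔn v).symm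

end Broom

lemma walk_lower {V : Type*} {G : SimpleGraph V} (f : V → ℕ)
    (hf : ∀ a b, G.Adj a b → f b ≤ f a + 1) :
    ∀ {a b : V} (w : G.Walk a b), f b ≤ f a + w.length := by
  intro a b w
  induction w with
  | nil => simp
  | @cons x y z h p ih =>
      have := hf x y h
      simp only [Walk.length_cons]
      omega

lemma dist_lower {V : Type*} {G : SimpleGraph V} (f : V → ℕ)
    (hf : ∀ a b, G.Adj a b → f b ≤ f a + 1) {u v : V}
    (hu : f u = 0) (hr : G.Reachable u v) : f v ≤ G.dist u v := by
  obtain ⟨w, hw⟩ := hr.exists_walk_length_eq_dist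
  have := walk_lower f hf w
  omega

section Broom2
variable {n Δ : ℕ} (hΔ2 : 2 ≤ Δ) (hΔn : Δ + 1 ≤ n)
include hΔ2 hΔn

lemma broom_dist_zero (v : Fin n) :
    min (v : ℕ) (n - Δ + 1) ≤ (broom n Δ).dist ⟨0, by omega⟩ v := by
  apply dist_lower (fun x : Fin n => min (x : ℕ) (n - Δ + 1))
  · intro a b hab
    rw [broom_adj] at hab
    omega
  · simp
  · exact broom_reach hΔ2 hΔn _ _

lemma broom_dist_last {v : Fin n} (hv : (v : ℕ) ≤ n - Δ) :
    n - Δ + 1 - v ≤ (broom n Δ).dist ⟨n - 1, by omega⟩ v := by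
  have h := dist_lower (G := broom n Δ)
    (fun x : Fin n => if (x : ℕ) ≤ n - Δ then n - Δ + 1 - x else if (x : ℕ) = n - 1 then 0 else 2)
    (by
      intro a b hab
      rw [broom_adj] at hab
      have ha := a.isLt
      have hb := b.isLt
      split_ifs <;> omega)
    (u := ⟨n - 1, by omega⟩) (v := v)
    (by simp; omega)
    (broom_reach hΔ2 hΔn _ _)
  simpa [hv] using h

lemma broom_ecc (v : Fin n) :
    eccentricity (broom n Δ) v =
      if (v : ℕ) ≤ n - Δ then max (v : ℕ) (n - Δ + 1 - v) else n - Δ + 1 := by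
  have hvn := v.isLt
  apply le_antisymm
  · apply Finset.sup_le
    intro u _
    have hun := u.isLt
    rcases le_or_gt (v : ℕ) (n - Δ) with hv | hv <;>
      rcases le_or_gt (u : ℕ) (n - Δ) with hu | hu
    · rw [if_pos hv]
      rcases le_total (v : ℕ) (u : ℕ) with h | h
      · have := broom_dist_pp hΔ2 hΔn h hu
        omega
      · have := broom_dist_pp hΔ2 hΔn h hv
        rw [SimpleGraph.dist_comm] at this
        omega
    · rw [if_pos hv]
      have := broom_dist_pend hΔ2 hΔn hv hu
      omega
    · rw [if_neg (by omega)]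
      have := broom_dist_pend hΔ2 hΔn hu hv
      rw [SimpleGraph.dist_comm] at this
      omega
    · rw [if_neg (by omega)]
      rcases eq_or_ne v u with rfl | hne
      · rw [SimpleGraph.dist_self]; omega
      · have := broom_dist_pend_pend hΔ2 hΔn hv hu hne
        omega
  · have h0 : (broom n Δ).dist v ⟨0, by omega⟩ ≥ min (v : ℕ) (n - Δ + 1) := by
      rw [SimpleGraph.dist_comm]; exact broom_dist_zero hΔ2 hΔn v
    have hs0 : (broom n Δ).dist v ⟨0, by omega⟩ ≤ eccentricity (broom n Δ) v :=
      Finset.le_sup (Finset.mem_univ _)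
    rcases le_or_gt (v : ℕ) (n - Δ) with hv | hv
    · rw [if_pos hv]
      have hl : (broom n Δ).dist v ⟨n - 1, by omega⟩ ≥ n - Δ + 1 - v := by
        rw [SimpleGraph.dist_comm]; exact broom_dist_last hΔ2 hΔn hv
      have hsl : (broom n Δ).dist v ⟨n - 1, by omega⟩ ≤ eccentricity (broom n Δ) v :=
        Finset.le_sup (Finset.mem_univ _)
      omega
    · rw [if_neg (by omega)]
      omega

end Broom2


lemma star_adj {n : ℕ} {i j : Fin n} :
    (_root_.starGraph n).Adj i j ↔ (i : ℕ) ≠ (j : ℕ) ∧ ((i : ℕ) = 0 ∨ (j : ℕ) = 0) := by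
  simp only [_root_.starGraph, fromRel_adj, ne_eq, Fin.ext_iff]
  try tauto

lemma star_ecc {n : ℕ} (hn : 4 ≤ n) (v : Fin n) :
    eccentricity (_root_.starGraph n) v = if (v : ℕ) = 0 then 1 else 2 := by
  have hvn := v.isLt
  apply le_antisymm
  · apply Finset.sup_le
    intro u _
    have hun := u.isLt
    rcases eq_or_ne v u with rfl | hne
    · rw [SimpleGraph.dist_self]; split_ifs <;> omega
    · rcases eq_or_ne (v : ℕ) 0 with hv0 | hv0
      · have : (_root_.starGraph n).dist v u = 1 := by
          rw [SimpleGraph.dist_eq_one_iff_adj, star_adj]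
          exact ⟨fun h => hne (Fin.ext h), Or.inl hv0⟩
        simp [this, hv0]
      · rcases eq_or_ne (u : ℕ) 0 with hu0 | hu0
        · have : (_root_.starGraph n).dist v u = 1 := by
            rw [SimpleGraph.dist_eq_one_iff_adj, star_adj]
            exact ⟨fun h => hne (Fin.ext h), Or.inr hu0⟩
          rw [this, if_neg hv0]; omega
        · have h1 : (_root_.starGraph n).Adj v ⟨0, by omega⟩ := by
            rw [star_adj]; simp only [Fin.val_mk, true_and, and_true, or_true, true_or, ne_eq]; omega
          have h2 : (_root_.starGraph n).Adj ⟨0, by omega⟩ u := by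
            rw [star_adj]; simp only [Fin.val_mk, true_and, and_true, or_true, true_or, ne_eq]; omega
          have := dist_le (Walk.cons h1 (Walk.cons h2 Walk.nil))
          simp only [Walk.length_cons, Walk.length_nil] at this
          rw [if_neg hv0]; omega
  · rcases eq_or_ne (v : ℕ) 0 with hv0 | hv0
    · rw [if_pos hv0]
      have h1 : (_root_.starGraph n).dist v ⟨1, by omega⟩ = 1 := by
        rw [SimpleGraph.dist_eq_one_iff_adj, star_adj]
        simp only [Fin.val_mk, true_and, and_true, or_true, true_or, ne_eq]; omega
      calc 1 = (_root_.starGraph n).dist v ⟨1, by omega⟩ := h1.symm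
        _ ≤ _ := Finset.le_sup (Finset.mem_univ _)
    · rw [if_neg hv0]
      set w : Fin n := if (v : ℕ) = 1 then ⟨2, by omega⟩ else ⟨1, by omega⟩ with hw
      have hw0 : (w : ℕ) ≠ 0 ∧ (w : ℕ) ≠ (v : ℕ) := by
        rcases eq_or_ne (v : ℕ) 1 with h | h <;> simp [hw, h] <;> omega
      have hadj1 : (_root_.starGraph n).Adj v ⟨0, by omega⟩ := by
        rw [star_adj]; simp only [Fin.val_mk, true_and, and_true, or_true, true_or, ne_eq]; omega
      have hadj2 : (_root_.starGraph n).Adj ⟨0, by omega⟩ w := by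
        rw [star_adj]; simp only [Fin.val_mk, true_and, and_true, or_true, true_or, ne_eq]; omega
      have hreach : (_root_.starGraph n).Reachable v w := hadj1.reachable.trans hadj2.reachable
      have hd0 : (_root_.starGraph n).dist v w ≠ 0 :=
        SimpleGraph.dist_ne_zero_iff_ne_and_reachable.mpr
          ⟨fun h => hw0.2 (by rw [h]), hreach⟩
      have hd1 : (_root_.starGraph n).dist v w ≠ 1 := by
        rw [ne_eq, SimpleGraph.dist_eq_one_iff_adj, star_adj]
        push_neg
        intro _
        omega
      have hle : (_root_.starGraph n).dist v w ≤ eccentricity (_root_.starGraph n) v :=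
        Finset.le_sup (Finset.mem_univ w)
      omega


lemma broom_two_eq_path {n : ℕ} : broom n 2 = SimpleGraph.pathGraph n := by
  ext i j
  rw [broom_adj, pathGraph_adj]
  have := i.isLt
  have := j.isLt
  omega


/-- For `3 ≤ Δ ≤ n-1` one has `ecc (B(n,Δ)) < ecc (B(n,Δ-1))`; consequently the chain
`ecc (Sₙ) = ecc (B(n,n-1)) < ⋯ < ecc (B(n,2)) = ecc (Pₙ)` holds. -/
theorem avgEcc_broom_strict_chain {n Δ : ℕ} (hΔ : 3 ≤ Δ) (hΔn : Δ ≤ n - 1) :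
    avgEcc (broom n Δ) < avgEcc (broom n (Δ - 1)) ∧
    avgEcc (_root_.starGraph n) = avgEcc (broom n (n - 1)) ∧
    avgEcc (broom n 2) = avgEcc (SimpleGraph.pathGraph n) := by
  have hn : 4 ≤ n := by omega
  refine ⟨?_, ?_, by rw [broom_two_eq_path]⟩
  · have hsum : (∑ v : Fin n, eccentricity (broom n Δ) v) <
        ∑ v : Fin n, eccentricity (broom n (Δ - 1)) v := by
      apply Finset.sum_lt_sum
      · intro i _
        rw [broom_ecc (by omega : 2 ≤ Δ) (by omega : Δ + 1 ≤ n),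
          broom_ecc (by omega : 2 ≤ Δ - 1) (by omega : Δ - 1 + 1 ≤ n)]
        have := i.isLt
        split_ifs <;> omega
      · refine ⟨⟨n - 1, by omega⟩, Finset.mem_univ _, ?_⟩
        rw [broom_ecc (by omega : 2 ≤ Δ) (by omega : Δ + 1 ≤ n),
          broom_ecc (by omega : 2 ≤ Δ - 1) (by omega : Δ - 1 + 1 ≤ n)]
        simp only [Fin.val_mk]
        split_ifs <;> omega
    unfold avgEcc
    rw [Fintype.card_fin]
    apply div_lt_div_of_pos_right _ (by positivity)
    rw [← Nat.cast_sum, ← Nat.cast_sum]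
    exact_mod_cast hsum
  · have hsum : (∑ v : Fin n, eccentricity (_root_.starGraph n) v) =
        ∑ v : Fin n, eccentricity (broom n (n - 1)) v := by
      apply Fintype.sum_equiv (Equiv.swap (⟨0, by omega⟩ : Fin n) ⟨1, by omega⟩)
      intro x
      have hx := x.isLt
      have hb := broom_ecc (by omega : 2 ≤ n - 1) (by omega : n - 1 + 1 ≤ n)
      have hm1 : n - (n - 1) = 1 := by omega
      rcases eq_or_ne x (⟨0, by omega⟩ : Fin n) with h0 | h0
      · rw [h0, Equiv.swap_apply_left, star_ecc hn, hb]
        simp [hm1]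
      · rcases eq_or_ne x (⟨1, by omega⟩ : Fin n) with h1 | h1
        · rw [h1, Equiv.swap_apply_right, star_ecc hn, hb]
          simp [hm1]
        · rw [Equiv.swap_apply_of_ne_of_ne h0 h1, star_ecc hn, hb]
          have hx0 : (x : ℕ) ≠ 0 := fun h => h0 (Fin.ext h)
          have hx1 : (x : ℕ) ≠ 1 := fun h => h1 (Fin.ext h)
          rw [hm1, if_neg hx0, if_neg (by omega)]
    unfold avgEcc
    rw [← Nat.cast_sum, ← Nat.cast_sum, hsum]
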